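/- Let λ = (λ_l)_{l∈H*} be a tuple of nonnegative integers summing to n, and G_λ = ∏_l G_{λ_l}(G,H) embedded block-diagonally in G_n = G_n(G,H). Then the number of double cosets in G_λ\G_n/G_λ that contain a diagonal representative (an element of G^n with trivial permutation part, entry product in H) equals [G:H]^{ℓ(λ)−1}, where ℓ(λ) is the number of nonzero parts of λ. -/

import Mathlib

open SemidirectProduct

/-- The action of permutations of `ι` on `ι → G` by permuting coordinates. -/
def permAut (ι G : Type*) [Group G] : Equiv.Perm ι →* MulAut (ι → G) where
  toFun σ := { Equiv.arrowCongr σ (Equiv.refl G) with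
               map_mul' := fun f g => rfl }
  map_one' := by ext f i; rfl
  map_mul' σ τ := by ext f i; rfl

/-- The wreath product `S_ι[G]`, a model for the group of monomial matrices
with rows/columns indexed by `ι` and nonzero entries in `G`. -/
abbrev Wreath (ι G : Type*) [Group G] := (ι → G) ⋊[permAut ι G] Equiv.Perm ι

@[simp] lemma permAut_apply {ι G : Type*} [Group G] (σ : Equiv.Perm ι) (f : ι → G) (i : ι) :
    permAut ι G σ f i = f (σ.symm i) := rfl

/-- The product of the nonzero entries of a monomial matrix. -/
def entryProdFun {ι G : Type*} [Fintype ι] [CommGroup G] (w : Wreath ι G) : G :=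
  ∏ i, w.left i

/-- The entry-product map as a monoid hom. -/
def entryProd (ι G : Type*) [Fintype ι] [CommGroup G] : Wreath ι G →* G where
  toFun := entryProdFun
  map_one' := by simp [entryProdFun]
  map_mul' a b := by
    simp only [entryProdFun, mul_left, Pi.mul_apply, Finset.prod_mul_distrib]
    congr 1
    exact Equiv.prod_comp a.right.symm fun i => b.left i

/-- `G_n(G, H)`: the subgroup of the wreath product consisting of monomial
matrices whose entries multiply to an element of `H`. -/
def GnSubgroup (n : ℕ) (G : Type*) [CommGroup G] (H : Subgroup G) :
    Subgroup (Wreath (Fin n) G) :=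
  Subgroup.comap (entryProd (Fin n) G) H

lemma mem_GnSubgroup {n : ℕ} {G : Type*} [CommGroup G] {H : Subgroup G}
    (w : Wreath (Fin n) G) : w ∈ GnSubgroup n G H ↔ (∏ i, w.left i) ∈ H := Iff.rfl

/-- The diagonal embedding of `H^n` into the wreath product. -/
def diagW {n : ℕ} {G : Type*} [CommGroup G] (H : Subgroup G) :
    (Fin n → ↥H) →* Wreath (Fin n) G :=
  SemidirectProduct.inl.comp
    (Pi.monoidHom fun i => H.subtype.comp (Pi.evalMonoidHom (fun _ => ↥H) i))

@[simp] lemma diagW_left {n : ℕ} {G : Type*} [CommGroup G] {H : Subgroup G}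
    (h : Fin n → ↥H) (i : Fin n) : (diagW H h).left i = (h i : G) := rfl

@[simp] lemma diagW_right {n : ℕ} {G : Type*} [CommGroup G] {H : Subgroup G}
    (h : Fin n → ↥H) : (diagW H h).right = 1 := rfl

lemma diagW_mem {n : ℕ} {G : Type*} [CommGroup G] (H : Subgroup G) (h : Fin n → ↥H) :
    diagW H h ∈ GnSubgroup n G H := by
  simp only [mem_GnSubgroup, diagW_left]
  exact_mod_cast (Submonoid.prod_mem H.toSubmonoid (fun i _ => (h i).2))

/-- The diagonal embedding of `H^n` into `G_n(G,H)`. -/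
def diagGn {n : ℕ} {G : Type*} [CommGroup G] (H : Subgroup G) :
    (Fin n → ↥H) →* ↥(GnSubgroup n G H) :=
  (diagW H).codRestrict _ (diagW_mem H)

/-- Entrywise reduction mod `H`, as a map of wreath products. -/
def reduceW (n : ℕ) (G : Type*) [CommGroup G] (H : Subgroup G) :
    Wreath (Fin n) G →* Wreath (Fin n) (G ⧸ H) :=
  SemidirectProduct.map
    (Pi.monoidHom fun i => (QuotientGroup.mk' H).comp (Pi.evalMonoidHom (fun _ => G) i))
    (MonoidHom.id _)
    (fun σ => by ext f i; rfl)

lemma reduceW_mem {n : ℕ} {G : Type*} [CommGroup G] (H : Subgroup G)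
    (w : ↥(GnSubgroup n G H)) : reduceW n G H w.1 ∈ GnSubgroup n (G ⧸ H) ⊥ := by
  have hw := w.2
  simp only [mem_GnSubgroup] at hw ⊢
  have : (∏ i, (reduceW n G H w.1).left i) = QuotientGroup.mk' H (∏ i, w.1.left i) := by
    rw [map_prod]; rfl
  rw [this, Subgroup.mem_bot]
  rw [QuotientGroup.mk'_apply, QuotientGroup.eq_one_iff]
  exact hw

/-- The reduction-mod-`H` homomorphism `φ : G_n(G,H) → G_n(G/H, 1)`. -/
def phiGn (n : ℕ) (G : Type*) [CommGroup G] (H : Subgroup G) :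
    ↥(GnSubgroup n G H) →* ↥(GnSubgroup n (G ⧸ H) ⊥) :=
  ((reduceW n G H).comp (GnSubgroup n G H).subtype).codRestrict _ (reduceW_mem H)

/-- The character `l^{⊗n}` of `H^n` associated to a character `l` of `H`. -/
def tensorChar {n : ℕ} {G : Type*} [CommGroup G] {H : Subgroup G}
    (l : ↥H →* ℂˣ) : (Fin n → ↥H) →* ℂˣ :=
  { toFun := fun h => ∏ i, l (h i)
    map_one' := by simp
    map_mul' := fun h h' => by simp [Finset.prod_mul_distrib] }

/-- The `l^{⊗n}`-isotypic component of the restriction to the diagonal `H^n` of a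
representation `ρ` of `G_n(G,H)`: the simultaneous eigenspace on which each
`diagGn H h` acts by the scalar `l^{⊗n}(h)`. -/
def isotypic {n : ℕ} {G : Type*} [CommGroup G] {H : Subgroup G}
    (l : ↥H →* ℂˣ) {V : Type*} [AddCommGroup V] [Module ℂ V]
    (ρ : Representation ℂ ↥(GnSubgroup n G H) V) : Submodule ℂ V :=
  ⨅ h : Fin n → ↥H, Module.End.eigenspace (ρ (diagGn H h)) ((tensorChar l h : ℂˣ) : ℂ)

/-- Irreducibility of a representation. -/
def IsIrred {k : Type*} [Field k] {Γ : Type*} [Group Γ] {V : Type*}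
    [AddCommGroup V] [Module k V] (ρ : Representation k Γ V) : Prop :=
  (∃ v : V, v ≠ 0) ∧
  ∀ W : Submodule k V, (∀ g : Γ, ∀ v ∈ W, ρ g v ∈ W) → W = ⊥ ∨ W = ⊤

/-- Equivalence (isomorphism) of representations. -/
def EquivRep {k : Type*} [Field k] {Γ : Type*} [Group Γ]
    {V V' : Type*} [AddCommGroup V] [Module k V] [AddCommGroup V'] [Module k V']
    (ρ : Representation k Γ V) (σ : Representation k Γ V') : Prop :=
  ∃ e : V ≃ₗ[k] V', ∀ (g : Γ) (v : V), e (ρ g v) = σ g (e v)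

/-- Twisting a representation by a one-dimensional character. -/
def smulRep {Γ : Type*} [Group Γ] {V : Type*} [AddCommGroup V] [Module ℂ V]
    (χ : Γ →* ℂˣ) (ρ : Representation ℂ Γ V) : Representation ℂ Γ V where
  toFun g := ((χ g : ℂ)) • ρ g
  map_one' := by simp
  map_mul' g g' := by
    ext v
    simp only [map_mul, LinearMap.smul_apply, Module.End.mul_apply, Units.val_mul,
      LinearMap.map_smul_of_tower, smul_smul, mul_comm]


/-- The complex reflection group `G(m,p,n)`: monomial matrices whose nonzero
entries are `m`-th roots of unity and whose entry product is an `m/p`-th root of unity. -/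
def Gmpn (m p n : ℕ) : Subgroup (Wreath (Fin n) ℂˣ) where
  carrier := {w | (∀ i, w.left i ^ m = 1) ∧ (∏ i, w.left i) ^ (m / p) = 1}
  one_mem' := by simp
  mul_mem' := by
    rintro a b ⟨ha1, ha2⟩ ⟨hb1, hb2⟩
    constructor
    · intro i
      simp only [mul_left, Pi.mul_apply, permAut_apply, mul_pow, ha1, hb1, one_mul]
    · have : (∏ i, (a * b).left i) = (∏ i, a.left i) * ∏ i, b.left i :=
        map_mul (entryProd (Fin n) ℂˣ) a b
      rw [this, mul_pow, ha2, hb2, one_mul]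
  inv_mem' := by
    rintro a ⟨ha1, ha2⟩
    constructor
    · intro i
      have : a⁻¹.left i = (a.left (a.right i))⁻¹ := by
        rw [SemidirectProduct.inv_left]; rfl
      rw [this, inv_pow, ha1, inv_one]
    · have : (∏ i, a⁻¹.left i) = (∏ i, a.left i)⁻¹ := map_inv (entryProd (Fin n) ℂˣ) a
      rw [this, inv_pow, ha2, inv_one]


lemma permCongr_perm_symm {α β : Type*} (e : α ≃ β) (p : Equiv.Perm α) :
    (e.permCongr p).symm = e.permCongr p.symm := by
  ext x; simp [Equiv.permCongr_def]

/-- The block-diagonal placement of a pair of monomial matrices. -/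
def blockDiagFun {G : Type*} [Group G] {k l : ℕ}
    (a : Wreath (Fin k) G) (b : Wreath (Fin l) G) : Wreath (Fin (k + l)) G :=
  ⟨fun i => Sum.elim a.left b.left (finSumFinEquiv.symm i),
   finSumFinEquiv.permCongr (Equiv.sumCongr a.right b.right)⟩

/-- The block-diagonal embedding as a group homomorphism on full wreath products. -/
def blockDiagHom (G : Type*) [Group G] (k l : ℕ) :
    Wreath (Fin k) G × Wreath (Fin l) G →* Wreath (Fin (k + l)) G where
  toFun p := blockDiagFun p.1 p.2
  map_one' := by
    apply SemidirectProduct.ext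
    · funext i
      rcases h : finSumFinEquiv.symm i with x | x <;>
        simp [blockDiagFun, h]
    · ext i
      simp [blockDiagFun, Equiv.permCongr]
  map_mul' p q := by
    apply SemidirectProduct.ext
    · funext i
      rcases h : finSumFinEquiv.symm i with x | x <;>
        simp [blockDiagFun, h, mul_left, permAut_apply, permCongr_perm_symm,
          Equiv.permCongr_apply, Equiv.symm_apply_apply, Equiv.sumCongr_symm,
          Equiv.sumCongr_apply, Sum.map]
    · ext i
      rcases h : finSumFinEquiv.symm i with x | x <;>
        simp [blockDiagFun, h, mul_right, Equiv.permCongr_apply, Equiv.symm_apply_apply,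
          Equiv.sumCongr_apply, Sum.map, permCongr_perm_symm]


open scoped Classical in
/-- The block subgroup `G_λ = ∏_j G_{λ_j}(G,H)` of block-diagonal monomial matrices,
where the blocks are the fibers of `bl : Fin n → ι` (so `λ_j` is the size of the
fiber over `j`): permutations must preserve each block, and the product of the
entries in each block must lie in `H`. -/
def blockSubgroupH {n : ℕ} {G : Type*} [CommGroup G] (H : Subgroup G)
    {ι : Type*} (bl : Fin n → ι) : Subgroup (Wreath (Fin n) G) where
  carrier := {w | (∀ i, bl (w.right i) = bl i) ∧
    ∀ j : ι, (∏ i, if bl i = j then w.left i else 1) ∈ H}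
  one_mem' := by
    refine ⟨fun i => rfl, fun j => ?_⟩
    simpa using H.one_mem
  mul_mem' := by
    rintro a b ⟨ha1, ha2⟩ ⟨hb1, hb2⟩
    have hperm : ∀ i, bl (a.right i) = bl i := ha1
    refine ⟨fun i => ?_, fun j => ?_⟩
    · have : (a * b).right i = a.right (b.right i) := rfl
      rw [this, ha1, hb1]
    · have hsplit : (∏ i, if bl i = j then (a * b).left i else 1)
          = (∏ i, if bl i = j then a.left i else 1) *
            ∏ i, if bl i = j then b.left (a.right.symm i) else 1 := by
        rw [← Finset.prod_mul_distrib]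
        refine Finset.prod_congr rfl fun i _ => ?_
        by_cases h : bl i = j <;>
          simp [h, mul_left, permAut_apply]
      have hre : (∏ i, if bl i = j then b.left (a.right.symm i) else 1)
          = ∏ i, if bl i = j then b.left i else 1 := by
        refine Fintype.prod_equiv a.right.symm _ _ fun i => ?_
        have : bl (a.right.symm i) = bl i := by
          conv_rhs => rw [← a.right.apply_symm_apply i, ha1]
        rw [this]
      rw [hsplit, hre]
      exact H.mul_mem (ha2 j) (hb2 j)
  inv_mem' := by
    rintro a ⟨ha1, ha2⟩
    have hsymm : ∀ i, bl (a.right.symm i) = bl i := fun i => by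
      conv_rhs => rw [← a.right.apply_symm_apply i, ha1]
    refine ⟨fun i => ?_, fun j => ?_⟩
    · have : a⁻¹.right i = a.right.symm i := rfl
      rw [this, hsymm]
    · have hinv : ∀ i, a⁻¹.left i = (a.left (a.right i))⁻¹ := fun i => by
        rw [SemidirectProduct.inv_left]; rfl
      have : (∏ i, if bl i = j then a⁻¹.left i else 1)
          = (∏ i, if bl i = j then a.left i else 1)⁻¹ := by
        rw [← Finset.prod_inv_distrib]
        refine (Fintype.prod_equiv a.right _ _ fun i => ?_)
        rw [hinv]
        by_cases h : bl i = j
        · rw [if_pos h, if_pos (by rw [ha1, h])]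
        · rw [if_neg h, if_neg (by rw [ha1]; exact h), inv_one]
      rw [this]
      exact H.inv_mem (ha2 j)


open scoped TensorProduct

section Block19

variable {n k : ℕ} {G : Type*} [CommGroup G] (c : Fin n → Fin k)

lemma blockSubgroupH_right_eq {H : Subgroup G} {ι : Type*} {bl : Fin n → ι}
    (w : ↥(blockSubgroupH H bl)) (i : Fin n) : bl (w.1.right i) = bl i := w.2.1 i

/-- The permutation of the block `c⁻¹(j)` induced by a block-preserving element. -/
def blockPerm (w : ↥(blockSubgroupH (⊤ : Subgroup G) c)) (j : Fin k) :
    Equiv.Perm {i : Fin n // c i = j} :=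
  w.1.right.subtypePerm (fun i => by rw [blockSubgroupH_right_eq w i])

/-- The representation `⊠_j Φ_{l_j}(π_j)` of the block subgroup `∏_j S_{λ_j}[G]`:
the external tensor product over the blocks `j` of the pullback of `π_j` along the
projection to the symmetric group of the block, twisted by the character `l_j`
applied to the entries in block `j`. -/
noncomputable def blockRep (l : Fin k → (G →* ℂˣ)) (V : Fin k → Type*)
    [∀ j, AddCommGroup (V j)] [∀ j, Module ℂ (V j)]
    (π : ∀ j, Representation ℂ (Equiv.Perm {i : Fin n // c i = j}) (V j)) :
    Representation ℂ ↥(blockSubgroupH (⊤ : Subgroup G) c) (⨂[ℂ] j, V j) where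
  toFun w := (∏ i, (l (c i) (w.1.left i) : ℂ)) •
    PiTensorProduct.map (fun j => π j (blockPerm c w j))
  map_one' := by
    have h1 : ∀ j, blockPerm c (1 : ↥(blockSubgroupH (⊤ : Subgroup G) c)) j = 1 :=
      fun j => Equiv.Perm.subtypePerm_one _ _
    simp only [h1]
    simp [PiTensorProduct.map_one]
  map_mul' w w' := by
    have hb : ∀ j, blockPerm c (w * w') j = blockPerm c w j * blockPerm c w' j := by
      intro j
      ext x
      rfl
    have hmap : PiTensorProduct.map (fun j => π j (blockPerm c (w * w') j))
        = (PiTensorProduct.map fun j => π j (blockPerm c w j)) ∘ₗ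
          (PiTensorProduct.map fun j => π j (blockPerm c w' j)) := by
      rw [← PiTensorProduct.map_comp]
      congr 1
      funext j
      rw [hb j, map_mul]
      rfl
    have hscal : (∏ i, (l (c i) ((w * w').1.left i) : ℂ))
        = (∏ i, (l (c i) (w.1.left i) : ℂ)) * ∏ i, (l (c i) (w'.1.left i) : ℂ) := by
      have : ∀ i, (w * w').1.left i = w.1.left i * w'.1.left (w.1.right.symm i) := by
        intro i; rfl
      simp only [this, map_mul, Units.val_mul, Finset.prod_mul_distrib]
      congr 1
      refine Fintype.prod_equiv w.1.right.symm _ _ fun i => ?_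
      have : c (w.1.right.symm i) = c i := by
        conv_rhs => rw [← w.1.right.apply_symm_apply i, blockSubgroupH_right_eq w]
      rw [this]
    rw [hmap, hscal, Module.End.mul_eq_comp, LinearMap.smul_comp, LinearMap.comp_smul,
      smul_smul]

end Block19

/-- The space of the representation induced from a representation `ρ` of a
subgroup `K` of `Γ`: functions `f : Γ → V` with `f (k * g) = ρ k (f g)`. -/
def IndV {Γ : Type*} [Group Γ] (K : Subgroup Γ) {V : Type*} [AddCommGroup V]
    [Module ℂ V] (ρ : Representation ℂ ↥K V) : Submodule ℂ (Γ → V) where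
  carrier := {f | ∀ (x : ↥K) (g : Γ), f (↑x * g) = ρ x (f g)}
  zero_mem' := by intro x g; simp
  add_mem' := by intro f f' hf hf' x g; simp [hf x g, hf' x g]
  smul_mem' := by intro a f hf x g; simp [hf x g]

/-- The representation of `Γ` induced from the representation `ρ` of the
subgroup `K`, with `Γ` acting by right translation. -/
def IndRep {Γ : Type*} [Group Γ] (K : Subgroup Γ) {V : Type*} [AddCommGroup V]
    [Module ℂ V] (ρ : Representation ℂ ↥K V) : Representation ℂ Γ ↥(IndV K ρ) where
  toFun g :=
    { toFun := fun f => ⟨fun x => f.1 (x * g), fun y x => by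
        simpa [mul_assoc] using f.2 y (x * g)⟩
      map_add' := fun f f' => by ext x; rfl
      map_smul' := fun a f => by ext x; rfl }
  map_one' := by ext f x; simp
  map_mul' g g' := by
    ext f x
    show f.1 (x * (g * g')) = f.1 (x * g * g')
    rw [mul_assoc]

/-- Transport of permutations along an equivalence, as a group homomorphism. -/
def permCongrHom {α β : Type*} (e : α ≃ β) : Equiv.Perm α →* Equiv.Perm β where
  toFun := e.permCongr
  map_one' := by ext x; simp
  map_mul' p q := by ext x; simp


section Aux18

open scoped Classical

variable {n : ℕ} {G : Type*} [CommGroup G] {ι : Type*}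

/-- The product of the entries of `w` in the block `bl⁻¹(j)`. -/
noncomputable def blP (bl : Fin n → ι) (j : ι) (w : Wreath (Fin n) G) : G :=
  ∏ i, if bl i = j then w.left i else 1

lemma mem_blockSubgroupH_iff {H : Subgroup G} {bl : Fin n → ι} {w : Wreath (Fin n) G} :
    w ∈ blockSubgroupH H bl ↔
      (∀ i, bl (w.right i) = bl i) ∧ ∀ j, blP bl j w ∈ H := Iff.rfl

lemma blP_mul {bl : Fin n → ι} {a b : Wreath (Fin n) G}
    (ha : ∀ i, bl (a.right i) = bl i) (j : ι) :
    blP bl j (a * b) = blP bl j a * blP bl j b := by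
  have hsplit : blP bl j (a * b)
      = (∏ i, if bl i = j then a.left i else 1) *
        ∏ i, if bl i = j then b.left (a.right.symm i) else 1 := by
    rw [blP, ← Finset.prod_mul_distrib]
    refine Finset.prod_congr rfl fun i _ => ?_
    by_cases h : bl i = j <;> simp [h, mul_left, permAut_apply]
  have hre : (∏ i, if bl i = j then b.left (a.right.symm i) else 1)
      = ∏ i, if bl i = j then b.left i else 1 := by
    refine Fintype.prod_equiv a.right.symm _ _ fun i => ?_
    have : bl (a.right.symm i) = bl i := by
      conv_rhs => rw [← a.right.apply_symm_apply i, ha]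
    rw [this]
  rw [hsplit, hre]; rfl

lemma blP_total (bl : Fin n → ι) (w : Wreath (Fin n) G) :
    ∏ j ∈ Finset.univ.image bl, blP bl j w = ∏ i, w.left i := by
  rw [← Finset.prod_fiberwise_of_maps_to (fun i _ => Finset.mem_image_of_mem bl (Finset.mem_univ i)) (fun i => w.left i)]
  refine Finset.prod_congr rfl fun j _ => ?_
  exact (Finset.prod_filter _ _).symm

lemma blockSubgroupH_le_Gn {H : Subgroup G} (bl : Fin n → ι) :
    blockSubgroupH H bl ≤ GnSubgroup n G H := by
  intro w hw
  rw [mem_GnSubgroup, ← blP_total bl w]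
  exact Submonoid.prod_mem _ fun j _ => (mem_blockSubgroupH_iff.mp hw).2 j

end Aux18

open scoped Classical in
lemma card_prod_eq_one (ι A : Type*) [Fintype ι] [Nonempty ι] [CommGroup A] [Finite A] :
    Nat.card {v : ι → A // ∏ j, v j = 1} = Nat.card A ^ (Nat.card ι - 1) := by
  obtain ⟨j₀⟩ := ‹Nonempty ι›
  have key : ∀ v : ι → A, ∏ j, v j = v j₀ * ∏ j : {j : ι // j ≠ j₀}, v j.1 := by
    intro v
    rw [Fintype.prod_eq_mul_prod_compl j₀ v]
    congr 1
    exact Finset.prod_subtype _ (fun x => by rw [Finset.mem_compl, Finset.mem_singleton]) _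
  have e : {v : ι → A // ∏ j, v j = 1} ≃ ({j : ι // j ≠ j₀} → A) :=
    { toFun := fun v j => v.1 j.1
      invFun := fun u => ⟨fun j => if h : j = j₀ then (∏ j' : {j : ι // j ≠ j₀}, u j')⁻¹
          else u ⟨j, h⟩, by
        rw [key, dif_pos rfl, inv_mul_eq_one]
        refine (Finset.prod_congr rfl fun j _ => ?_).symm
        exact dif_neg j.2⟩
      left_inv := fun v => by
        apply Subtype.ext
        funext j
        dsimp only
        by_cases h : j = j₀
        · rw [dif_pos h, h]
          have hk := key v.1
          rw [v.2] at hk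
          exact (eq_inv_of_mul_eq_one_left hk.symm).symm
        · exact dif_neg h
      right_inv := fun u => by
        funext j
        exact dif_neg j.2 }
  rw [Nat.card_congr e, Nat.card_fun, Nat.card_eq_fintype_card (α := {j : ι // j ≠ j₀}),
    Fintype.card_subtype_compl, Nat.card_eq_fintype_card (α := ι), Fintype.card_subtype_eq]

theorem statement18 (n : ℕ) (hn : 0 < n) (G : Type) [CommGroup G] [Finite G]
    (H : Subgroup G) (bl : Fin n → (↥H →* ℂˣ)) :
    Nat.card {q : DoubleCoset.Quotient
        (((blockSubgroupH H bl).subgroupOf (GnSubgroup n G H)) : Set ↥(GnSubgroup n G H))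
        (((blockSubgroupH H bl).subgroupOf (GnSubgroup n G H)) : Set ↥(GnSubgroup n G H)) //
      ∃ d : ↥(GnSubgroup n G H), (d : Wreath (Fin n) G).right = 1 ∧
        DoubleCoset.mk ((blockSubgroupH H bl).subgroupOf (GnSubgroup n G H))
          ((blockSubgroupH H bl).subgroupOf (GnSubgroup n G H)) d = q}
      = H.index ^ (Nat.card (Set.range bl) - 1) := by
  classical
  set K := (blockSubgroupH H bl).subgroupOf (GnSubgroup n G H) with hK
  set s : Finset (↥H →* ℂˣ) := Finset.univ.image bl with hs
  -- the block-product invariant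
  set Φ : ↥(GnSubgroup n G H) → (↥s → G ⧸ H) :=
    fun d j => QuotientGroup.mk' H (blP bl j.1 d.1) with hΦ
  have hΦprod : ∀ d : ↥(GnSubgroup n G H), ∏ j, Φ d j = 1 := by
    intro d
    rw [hΦ]
    dsimp only
    rw [← map_prod, Finset.prod_coe_sort s (fun j => blP bl j d.1), hs, blP_total,
      QuotientGroup.mk'_apply, QuotientGroup.eq_one_iff]
    exact d.2
  -- doset equality implies equal invariants
  have key1 : ∀ d d' : ↥(GnSubgroup n G H), (d : Wreath (Fin n) G).right = 1 →
      (d' : Wreath (Fin n) G).right = 1 → DoubleCoset.mk K K d = DoubleCoset.mk K K d' → Φ d = Φ d' := by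
    intro d d' hd hd' hq
    obtain ⟨a, haK, b, hbK, hmul⟩ := (DoubleCoset.eq K K d d').1 hq
    have haB := Subgroup.mem_subgroupOf.mp haK
    have hbB := Subgroup.mem_subgroupOf.mp hbK
    funext j
    have hpres : ∀ i, bl (((a : ↥(GnSubgroup n G H)) * d).1.right i) = bl i := by
      intro i
      show bl ((a.1.right * d.1.right) i) = bl i
      rw [hd]
      exact (mem_blockSubgroupH_iff.mp haB).1 i
    have h1 : blP bl j.1 d'.1 = blP bl j.1 (a.1 * d.1) * blP bl j.1 b.1 := by
      rw [hmul]
      exact blP_mul hpres j.1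
    have h2 : blP bl j.1 (a.1 * d.1) = blP bl j.1 a.1 * blP bl j.1 d.1 :=
      blP_mul (mem_blockSubgroupH_iff.mp haB).1 j.1
    have hΦd' : Φ d' j = QuotientGroup.mk' H (blP bl j.1 a.1) *
        QuotientGroup.mk' H (blP bl j.1 d.1) * QuotientGroup.mk' H (blP bl j.1 b.1) := by
      rw [hΦ]
      dsimp only
      rw [h1, h2, map_mul, map_mul]
    rw [hΦd',
      show ((QuotientGroup.mk' H) (blP bl j.1 a.1) : G ⧸ H) = 1 from
        (QuotientGroup.eq_one_iff _).2 ((mem_blockSubgroupH_iff.mp haB).2 j.1),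
      show ((QuotientGroup.mk' H) (blP bl j.1 b.1) : G ⧸ H) = 1 from
        (QuotientGroup.eq_one_iff _).2 ((mem_blockSubgroupH_iff.mp hbB).2 j.1),
      one_mul, mul_one]
  -- equal invariants implies doset equality
  have key2 : ∀ d d' : ↥(GnSubgroup n G H), (d : Wreath (Fin n) G).right = 1 →
      (d' : Wreath (Fin n) G).right = 1 → Φ d = Φ d' → DoubleCoset.mk K K d = DoubleCoset.mk K K d' := by
    intro d d' hd hd' hΦeq
    set a : Wreath (Fin n) G := ⟨fun i => d'.1.left i * (d.1.left i)⁻¹, 1⟩ with ha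
    have hamul : a * d.1 = d'.1 := by
      apply SemidirectProduct.ext
      · funext i
        show d'.1.left i * (d.1.left i)⁻¹ * (permAut (Fin n) G (1 : Equiv.Perm (Fin n)) d.1.left) i
            = d'.1.left i
        rw [map_one]
        exact inv_mul_cancel_right _ _
      · show (1 : Equiv.Perm (Fin n)) * d.1.right = d'.1.right
        rw [hd, hd', one_mul]
    have hablP : ∀ j, blP bl j a = blP bl j d'.1 * (blP bl j d.1)⁻¹ := by
      intro j
      rw [blP, blP, blP, ← Finset.prod_inv_distrib, ← Finset.prod_mul_distrib]
      refine Finset.prod_congr rfl fun i _ => ?_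
      by_cases h : bl i = j
      · simp only [if_pos h]; rfl
      · simp only [if_neg h, mul_one, inv_one]
    have haB : a ∈ blockSubgroupH H bl := by
      rw [mem_blockSubgroupH_iff]
      refine ⟨fun i => rfl, fun j => ?_⟩
      by_cases hj : j ∈ s
      · have := congrFun hΦeq ⟨j, hj⟩
        rw [hΦ] at this
        dsimp only at this
        rw [QuotientGroup.mk'_apply, QuotientGroup.mk'_apply, QuotientGroup.eq] at this
        rw [hablP, mul_comm]
        exact this
      · have : blP bl j a = 1 := by
          refine Finset.prod_eq_one fun i _ => if_neg fun h => hj ?_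
          rw [← h, hs]
          exact Finset.mem_image_of_mem bl (Finset.mem_univ i)
        rw [this]; exact H.one_mem
    have haG : a ∈ GnSubgroup n G H := blockSubgroupH_le_Gn bl haB
    refine (DoubleCoset.eq K K d d').2 ⟨⟨a, haG⟩, Subgroup.mem_subgroupOf.mpr haB, 1, K.one_mem, ?_⟩
    apply Subtype.ext
    show d'.1 = a * d.1 * 1
    rw [mul_one, hamul]
  -- every admissible invariant is attained by a diagonal element
  have key3 : ∀ v : ↥s → G ⧸ H, ∏ j, v j = 1 →
      ∃ d : ↥(GnSubgroup n G H), (d : Wreath (Fin n) G).right = 1 ∧ Φ d = v := by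
    intro v hv
    have hidx : ∀ j : ↥s, ∃ i : Fin n, bl i = j.1 := by
      intro j
      obtain ⟨i, _, hi⟩ := Finset.mem_image.mp j.2
      exact ⟨i, hi⟩
    choose idx hidx2 using hidx
    have hjOf : ∀ i : Fin n, bl i ∈ s := fun i => by
      rw [hs]; exact Finset.mem_image_of_mem bl (Finset.mem_univ i)
    set jOf : Fin n → ↥s := fun i => ⟨bl i, hjOf i⟩ with hjOfdef
    set w : Wreath (Fin n) G :=
      ⟨fun i => if i = idx (jOf i) then (v (jOf i)).out else 1, 1⟩ with hw
    have hblP : ∀ j : ↥s, blP bl j.1 w = (v j).out := by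
      intro j
      rw [blP]
      rw [Finset.prod_eq_single (idx j)]
      · rw [if_pos (hidx2 j)]
        have hj : jOf (idx j) = j := Subtype.ext (hidx2 j)
        show (if idx j = idx (jOf (idx j)) then (v (jOf (idx j))).out else 1) = (v j).out
        rw [hj, if_pos rfl]
      · intro i _ hne
        by_cases hb : bl i = j.1
        · have hj : jOf i = j := Subtype.ext hb
          rw [if_pos hb]
          show (if i = idx (jOf i) then (v (jOf i)).out else 1) = 1
          rw [hj, if_neg hne]
        · rw [if_neg hb]
      · intro h
        exact absurd (Finset.mem_univ _) h
    have hwG : w ∈ GnSubgroup n G H := by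
      have hval : (∏ i, w.left i) = ∏ j : ↥s, (v j).out := by
        rw [← blP_total bl w, ← hs, ← Finset.prod_coe_sort s (fun j => blP bl j w)]
        exact Finset.prod_congr rfl fun j _ => hblP j
      rw [mem_GnSubgroup, hval, ← QuotientGroup.eq_one_iff]
      have h1 : ((∏ j : ↥s, (v j).out : G) : G ⧸ H) = ∏ j : ↥s, ((v j).out : G ⧸ H) :=
        map_prod (QuotientGroup.mk' H) _ _
      have h2 : (∏ j : ↥s, ((v j).out : G ⧸ H)) = ∏ j : ↥s, v j :=
        Finset.prod_congr rfl fun j _ => QuotientGroup.out_eq' (v j)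
      rw [h1, h2]
      exact hv
    refine ⟨⟨w, hwG⟩, rfl, ?_⟩
    funext j
    rw [hΦ]
    dsimp only
    rw [hblP j, QuotientGroup.mk'_apply]
    exact QuotientGroup.out_eq' (v j)
  -- the bijection
  set T := {v : ↥s → G ⧸ H // ∏ j, v j = 1} with hT
  set f : {q : DoubleCoset.Quotient (K : Set ↥(GnSubgroup n G H)) (K : Set ↥(GnSubgroup n G H)) //
      ∃ d : ↥(GnSubgroup n G H), (d : Wreath (Fin n) G).right = 1 ∧ DoubleCoset.mk K K d = q} → T :=
    fun q => ⟨Φ q.2.choose, hΦprod q.2.choose⟩ with hf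
  have hbij : Function.Bijective f := by
    constructor
    · intro q q' h
      obtain ⟨hd1, hd2⟩ := q.2.choose_spec
      obtain ⟨hd1', hd2'⟩ := q'.2.choose_spec
      have : Φ q.2.choose = Φ q'.2.choose := congrArg Subtype.val h
      apply Subtype.ext
      rw [← hd2, ← hd2']
      exact key2 _ _ hd1 hd1' this
    · intro v
      obtain ⟨d, hd1, hd2⟩ := key3 v.1 v.2
      refine ⟨⟨DoubleCoset.mk K K d, d, hd1, rfl⟩, ?_⟩
      apply Subtype.ext
      have hspec := (⟨d, hd1, rfl⟩ : ∃ e : ↥(GnSubgroup n G H),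
        (e : Wreath (Fin n) G).right = 1 ∧ DoubleCoset.mk K K e = DoubleCoset.mk K K d).choose_spec
      show Φ _ = v.1
      rw [key1 _ d hspec.1 hd1 hspec.2, hd2]
  rw [Nat.card_eq_of_bijective f hbij]
  haveI hne : Nonempty ↥s :=
    ⟨⟨bl ⟨0, hn⟩, by rw [hs]; exact Finset.mem_image_of_mem bl (Finset.mem_univ _)⟩⟩
  rw [hT, card_prod_eq_one]
  have hrange : Set.range bl = ↑s := by
    ext x
    simp [hs, eq_comm]
  have h1 : Nat.card (Set.range bl) = s.card := by
    rw [Nat.card_coe_set_eq, hrange, Set.ncard_coe_finset]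
  have h2 : Nat.card ↥s = s.card := Nat.card_eq_finsetCard s
  rw [h2, h1, Subgroup.index]
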